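/- Fix 0 < r < 1 and let a = 1 - r²/2, δ' = r√(1 - r²/4). For x ∈ S^d \ {N,-N}, define f(x) = ((δ'/√(1-x_d²))·x₀, ..., (δ'/√(1-x_d²))·x_{d-1}, a) (the intersection of the great semicircle from N through x to -N with the boundary of the cap B_{S^d}(N, r)). If x, y ∈ S^d \ {N,-N} with |x_d| < a and ‖x - y‖ ≤ δ, then ‖f(x) - f(y)‖ ≤ 2δ. -/

import Mathlib

set_option maxHeartbeats 1000000

lemma aux_normsq {n : ℕ} (z : EuclideanSpace ℝ (Fin n)) : ‖z‖ ^ 2 = ∑ i, z i ^ 2 := by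
  rw [← real_inner_self_eq_norm_sq, PiLp.inner_apply]
  simp [sq, RCLike.inner_apply]

lemma aux_unit {E : Type*} [NormedAddCommGroup E] [NormedSpace ℝ E] (u v : E)
    (hu : u ≠ 0) (hv : v ≠ 0) :
    ‖‖u‖⁻¹ • u - ‖v‖⁻¹ • v‖ ≤ 2 * ‖u - v‖ / ‖u‖ := by
  have hu0 : (0:ℝ) < ‖u‖ := norm_pos_iff.2 hu
  have hv0 : (0:ℝ) < ‖v‖ := norm_pos_iff.2 hv
  have h1 : ‖u‖⁻¹ • u - ‖v‖⁻¹ • v = (‖u‖ * ‖v‖)⁻¹ • (‖v‖ • u - ‖u‖ • v) := by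
    rw [smul_sub, smul_smul, smul_smul]
    congr 2 <;> field_simp
  have h2 : ‖v‖ • u - ‖u‖ • v = ‖v‖ • (u - v) + (‖v‖ - ‖u‖) • v := by module
  have h3 : ‖‖v‖ • u - ‖u‖ • v‖ ≤ 2 * ‖v‖ * ‖u - v‖ := by
    rw [h2]
    calc ‖‖v‖ • (u - v) + (‖v‖ - ‖u‖) • v‖ ≤ ‖‖v‖ • (u - v)‖ + ‖(‖v‖ - ‖u‖) • v‖ :=
          norm_add_le _ _
      _ = ‖v‖ * ‖u - v‖ + |‖v‖ - ‖u‖| * ‖v‖ := by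
          rw [norm_smul, norm_smul, Real.norm_eq_abs, Real.norm_eq_abs,
            abs_of_nonneg hv0.le]
      _ ≤ ‖v‖ * ‖u - v‖ + ‖v - u‖ * ‖v‖ := by
          gcongr; exact abs_norm_sub_norm_le v u
      _ = 2 * ‖v‖ * ‖u - v‖ := by rw [norm_sub_rev]; ring
  rw [h1, norm_smul, Real.norm_eq_abs, abs_of_nonneg (by positivity)]
  rw [div_eq_mul_inv]
  calc (‖u‖ * ‖v‖)⁻¹ * ‖‖v‖ • u - ‖u‖ • v‖ ≤ (‖u‖ * ‖v‖)⁻¹ * (2 * ‖v‖ * ‖u - v‖) := by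
        gcongr
    _ = 2 * ‖u - v‖ * ‖u‖⁻¹ := by field_simp

theorem stmt_16 (d : ℕ) (r δ : ℝ) (hr0 : 0 < r) (hr1 : r < 1)
    (x y fx fy : EuclideanSpace ℝ (Fin (d + 1)))
    (hx : ‖x‖ = 1) (hy : ‖y‖ = 1)
    (hxa : |x (Fin.last d)| < 1 - r ^ 2 / 2)
    (hyp : |y (Fin.last d)| ≠ 1)
    (hxy : ‖x - y‖ ≤ δ)
    (hfx : ∀ i : Fin (d + 1), fx i =
      if i = Fin.last d then 1 - r ^ 2 / 2
      else r * Real.sqrt (1 - r ^ 2 / 4) /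
        Real.sqrt (1 - x (Fin.last d) ^ 2) * x i)
    (hfy : ∀ i : Fin (d + 1), fy i =
      if i = Fin.last d then 1 - r ^ 2 / 2
      else r * Real.sqrt (1 - r ^ 2 / 4) /
        Real.sqrt (1 - y (Fin.last d) ^ 2) * y i) :
    ‖fx - fy‖ ≤ 2 * δ := by
  set n := x (Fin.last d) with hn
  set m := y (Fin.last d) with hm
  set δ' := r * Real.sqrt (1 - r ^ 2 / 4) with hδ'
  have h14 : (0:ℝ) < 1 - r ^ 2 / 4 := by nlinarith
  have hδ'pos : 0 < δ' := by positivity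
  have hδ'sq : δ' ^ 2 = r ^ 2 * (1 - r ^ 2 / 4) := by
    rw [hδ', mul_pow, Real.sq_sqrt h14.le]
  -- unit-trimmed vectors
  set u : EuclideanSpace ℝ (Fin (d + 1)) := WithLp.toLp 2 (fun i => if i = Fin.last d then 0 else x i) with hu
  set v : EuclideanSpace ℝ (Fin (d + 1)) := WithLp.toLp 2 (fun i => if i = Fin.last d then 0 else y i) with hv
  have hsumx : ∑ i, x i ^ 2 = 1 := by
    have := aux_normsq x; rw [hx] at this; linarith [this]
  have hsumy : ∑ i, y i ^ 2 = 1 := by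
    have := aux_normsq y; rw [hy] at this; linarith [this]
  have husq : ‖u‖ ^ 2 = 1 - n ^ 2 := by
    rw [aux_normsq]
    have e : ∑ i, u i ^ 2 = ∑ i : Fin d, x i.castSucc ^ 2 := by
      rw [Fin.sum_univ_castSucc]
      have e0 : u (Fin.last d) = 0 := by simp [hu]
      rw [e0]
      simp only [ne_eq, zero_pow, add_zero, OfNat.ofNat_ne_zero, not_false_eq_true]
      refine Finset.sum_congr rfl fun i _ => ?_
      have e1 : u i.castSucc = x i.castSucc := by
        simp [hu, (Fin.castSucc_lt_last i).ne]
      rw [e1]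
    rw [e]
    have hs := hsumx
    rw [Fin.sum_univ_castSucc] at hs
    linarith
  have hvsq : ‖v‖ ^ 2 = 1 - m ^ 2 := by
    rw [aux_normsq]
    have e : ∑ i, v i ^ 2 = ∑ i : Fin d, y i.castSucc ^ 2 := by
      rw [Fin.sum_univ_castSucc]
      have e0 : v (Fin.last d) = 0 := by simp [hv]
      rw [e0]
      simp only [ne_eq, zero_pow, add_zero, OfNat.ofNat_ne_zero, not_false_eq_true]
      refine Finset.sum_congr rfl fun i _ => ?_
      have e1 : v i.castSucc = y i.castSucc := by
        simp [hv, (Fin.castSucc_lt_last i).ne]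
      rw [e1]
    rw [e]
    have hs := hsumy
    rw [Fin.sum_univ_castSucc] at hs
    linarith
  have hm1 : m ^ 2 ≤ 1 := by
    have : m ^ 2 ≤ ∑ i, y i ^ 2 :=
      Finset.single_le_sum (fun i _ => sq_nonneg (y i)) (Finset.mem_univ _)
    rw [hsumy] at this; exact this
  have hm1' : m ^ 2 < 1 := by
    have h1 : |m| ≤ 1 := by nlinarith [sq_abs m, abs_nonneg m]
    have h2 : |m| < 1 := lt_of_le_of_ne h1 hyp
    nlinarith [sq_abs m, abs_nonneg m]
  have ha : (0:ℝ) < 1 - r ^ 2 / 2 := by nlinarith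
  have hn1 : n ^ 2 < (1 - r ^ 2 / 2) ^ 2 := by
    rw [← sq_abs]; exact pow_lt_pow_left₀ hxa (abs_nonneg _) (by norm_num)
  have hδ'u : δ' ^ 2 < ‖u‖ ^ 2 := by rw [husq, hδ'sq]; nlinarith
  have hδ'ltu : δ' < ‖u‖ := lt_of_pow_lt_pow_left₀ 2 (norm_nonneg u) hδ'u
  have hupos : 0 < ‖u‖ := hδ'pos.trans hδ'ltu
  have hvpos : 0 < ‖v‖ := by
    have h2 : 0 < ‖v‖ ^ 2 := by rw [hvsq]; linarith
    nlinarith [norm_nonneg v]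
  have hsqrtu : Real.sqrt (1 - n ^ 2) = ‖u‖ := by
    rw [← husq, Real.sqrt_sq (norm_nonneg _)]
  have hsqrtv : Real.sqrt (1 - m ^ 2) = ‖v‖ := by
    rw [← hvsq, Real.sqrt_sq (norm_nonneg _)]
  have hkey : fx - fy = δ' • (‖u‖⁻¹ • u - ‖v‖⁻¹ • v) := by
    ext i
    simp only [PiLp.sub_apply, PiLp.smul_apply, smul_eq_mul]
    rw [hfx i, hfy i]
    by_cases h : i = Fin.last d
    · simp only [if_pos h, hu, hv, PiLp.toLp_apply, if_pos h]
      ring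
    · simp only [if_neg h, hu, hv, PiLp.toLp_apply, if_neg h]
      rw [← hu, ← hv, hsqrtu, hsqrtv]
      field_simp
  have huvxy : ‖u - v‖ ≤ ‖x - y‖ := by
    have h1 : ‖u - v‖ ^ 2 ≤ ‖x - y‖ ^ 2 := by
      rw [aux_normsq, aux_normsq, Fin.sum_univ_castSucc, Fin.sum_univ_castSucc]
      have e1 : ∀ i : Fin d, (u - v) i.castSucc = (x - y) i.castSucc := by
        intro i; simp [hu, hv, (Fin.castSucc_lt_last i).ne]
      have e2 : (u - v) (Fin.last d) = 0 := by simp [hu, hv]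
      simp only [e1, e2]
      nlinarith [sq_nonneg ((x - y) (Fin.last d))]
    nlinarith [norm_nonneg (u - v), norm_nonneg (x - y)]
  have haux := aux_unit u v (norm_pos_iff.1 hupos) (norm_pos_iff.1 hvpos)
  calc ‖fx - fy‖ = δ' * ‖‖u‖⁻¹ • u - ‖v‖⁻¹ • v‖ := by
        rw [hkey, norm_smul, Real.norm_eq_abs, abs_of_pos hδ'pos]
    _ ≤ δ' * (2 * ‖u - v‖ / ‖u‖) := by gcongr
    _ ≤ ‖u‖ * (2 * ‖u - v‖ / ‖u‖) := by
        gcongr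
    _ = 2 * ‖u - v‖ := by field_simp
    _ ≤ 2 * ‖x - y‖ := by linarith
    _ ≤ 2 * δ := by linarith
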